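/- If φ*(N) divides N and m is a squarefree integer dividing N, then the Euler totient φ(m) divides N. -/

import Mathlib

/-- The unitary totient function: φ*(n) = ∏_{p^e || n} (p^e - 1). -/
def uphi (n : ℕ) : ℕ := ∏ p ∈ n.primeFactors, (p ^ n.factorization p - 1)

theorem stmt2 (N m : ℕ) (hdvd : uphi N ∣ N) (hm : Squarefree m) (hmN : m ∣ N) :
    Nat.totient m ∣ N := by
  rcases eq_or_ne N 0 with rfl | hN
  · simp
  have hm0 : m ≠ 0 := hm.ne_zero
  have htot : Nat.totient m = ∏ p ∈ m.primeFactors, (p - 1) := by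
    rw [Nat.totient_eq_prod_factorization hm0, Nat.prod_factorization_eq_prod_primeFactors]
    refine Finset.prod_congr rfl fun p hp => ?_
    have h1 : m.factorization p = 1 := by
      have hle := (Nat.squarefree_iff_factorization_le_one hm0).mp hm p
      have : 1 ≤ m.factorization p :=
        (Nat.Prime.factorization_pos_of_dvd (Nat.prime_of_mem_primeFactors hp) hm0
          (Nat.dvd_of_mem_primeFactors hp))
      omega
    rw [h1]; simp
  rw [htot]
  refine dvd_trans ?_ hdvd
  refine dvd_trans (Finset.prod_dvd_prod_of_dvd _ _ fun p hp => ?_)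
    (Finset.prod_dvd_prod_of_subset _ _ _ (Nat.primeFactors_mono hmN hN))
  simpa using Nat.sub_dvd_pow_sub_pow p 1 (N.factorization p)
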